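/- Let P(x₁,…,xₙ) = P₁(x₁) + … + Pₙ(xₙ) where each P_i ∈ ℤ[x] is a one-variable polynomial with no constant term and not all P_i are zero (so every monomial of P contains a single variable). If P is non-trivially partition regular on ℕ (for every finite partition of ℕ there is a monochromatic solution a₁,…,aₙ of P = 0 with at least two distinct values among a₁,…,aₙ), then there exist a degree d ≥ 1 and a nonempty set J ⊆ {i : P_i ≠ 0} such that deg P_j = d for every j ∈ J and the sum of the leading coefficients of the P_j over j ∈ J equals 0. -/

import Mathlib

/- `ℕ+` plays the role of the paper's `ℕ` (the positive integers). -/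

open Polynomial Finset


lemma aux_pow_sub_pow (c e : ℕ) : ∀ d : ℕ, (c+e)^(d+1) ≤ c^(d+1) + (d+1)*e*(c+e)^d := by
  intro d
  induction d with
  | zero => simp [pow_succ]
  | succ d ih =>
    have h2 : c^(d+1) ≤ (c+e)^(d+1) := Nat.pow_le_pow_left (Nat.le_add_right _ _) _
    calc (c+e)^(d+2) = (c+e)^(d+1) * (c+e) := by ring
      _ ≤ (c^(d+1) + (d+1)*e*(c+e)^d) * (c+e) := Nat.mul_le_mul_right _ ih
      _ = c^(d+1)*c + c^(d+1)*e + (d+1)*e*((c+e)^d*(c+e)) := by ring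
      _ = c^(d+2) + c^(d+1)*e + (d+1)*e*(c+e)^(d+1) := by ring
      _ ≤ c^(d+2) + (c+e)^(d+1)*e + (d+1)*e*(c+e)^(d+1) := by
          have := Nat.mul_le_mul_right e h2; omega
      _ = c^(d+2) + (d+2)*e*(c+e)^(d+1) := by ring

lemma aux_abs_eval_le (Q : Polynomial ℤ) (x : ℤ) (hx : 1 ≤ x) :
    |Q.eval x| ≤ (∑ m ∈ Finset.range (Q.natDegree+1), |Q.coeff m|) * x^Q.natDegree := by
  rw [Polynomial.eval_eq_sum_range]
  have hx0 : (0:ℤ) ≤ x := by linarith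
  calc |∑ m ∈ range (Q.natDegree+1), Q.coeff m * x^m|
      ≤ ∑ m ∈ range (Q.natDegree+1), |Q.coeff m * x^m| := Finset.abs_sum_le_sum_abs _ _
    _ ≤ ∑ m ∈ range (Q.natDegree+1), |Q.coeff m| * x^Q.natDegree := by
        refine Finset.sum_le_sum ?_
        intro m hm
        rw [abs_mul, abs_pow, abs_of_nonneg hx0]
        have hm' : m ≤ Q.natDegree := by
          have := Finset.mem_range.mp hm; omega
        exact mul_le_mul_of_nonneg_left (pow_le_pow_right₀ hx hm') (abs_nonneg _)
    _ = (∑ m ∈ range (Q.natDegree+1), |Q.coeff m|) * x^Q.natDegree := by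
        rw [Finset.sum_mul]

lemma aux_abs_eval_sub_lead_le (Q : Polynomial ℤ) (x : ℤ) (hx : 1 ≤ x) :
    |Q.eval x - Q.leadingCoeff * x^Q.natDegree|
      ≤ (∑ m ∈ Finset.range (Q.natDegree+1), |Q.coeff m|) * x^(Q.natDegree - 1) := by
  rw [Polynomial.eval_eq_sum_range, Finset.sum_range_succ]
  have hx0 : (0:ℤ) ≤ x := by linarith
  have hlead : Q.coeff Q.natDegree = Q.leadingCoeff := rfl
  rw [hlead]
  simp only [add_sub_cancel_right]
  calc |∑ m ∈ range Q.natDegree, Q.coeff m * x^m|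
      ≤ ∑ m ∈ range Q.natDegree, |Q.coeff m * x^m| := Finset.abs_sum_le_sum_abs _ _
    _ ≤ ∑ m ∈ range Q.natDegree, |Q.coeff m| * x^(Q.natDegree - 1) := by
        refine Finset.sum_le_sum ?_
        intro m hm
        rw [abs_mul, abs_pow, abs_of_nonneg hx0]
        have hm' : m ≤ Q.natDegree - 1 := by
          have := Finset.mem_range.mp hm; omega
        exact mul_le_mul_of_nonneg_left (pow_le_pow_right₀ hx hm') (abs_nonneg _)
    _ ≤ ∑ m ∈ range (Q.natDegree+1), |Q.coeff m| * x^(Q.natDegree - 1) := by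
        refine Finset.sum_le_sum_of_subset_of_nonneg (by
          intro z hz; simp at hz ⊢; omega) ?_
        intro m _ _
        positivity
    _ = (∑ m ∈ range (Q.natDegree+1), |Q.coeff m|) * x^(Q.natDegree - 1) := by
        rw [Finset.sum_mul]

lemma aux_floor_window (w ε : ℝ) (h1 : 1/4 ≤ w - ⌊w⌋) (h2 : w - ⌊w⌋ < 3/4)
    (hε : |ε| ≤ 1/4) : ⌊w + 1 + ε⌋ = ⌊w⌋ + 1 := by
  have hε1 : -(1/4) ≤ ε := by
    have := abs_le.mp hε; exact this.1
  have hε2 : ε ≤ 1/4 := (abs_le.mp hε).2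
  rw [Int.floor_eq_iff]
  constructor
  · push_cast; linarith
  · push_cast; linarith

lemma aux_exists_shift (u v ε : ℝ) (hv : v = u + 1 + ε) (hε : |ε| ≤ 1/4) :
    ∃ σ : ℕ, σ ≤ 1 ∧ ⌊v + (σ:ℝ)/2⌋ = ⌊u + (σ:ℝ)/2⌋ + 1 := by
  have hfr1 : 0 ≤ u - ⌊u⌋ := by
    have := Int.floor_le u; linarith
  have hfr2 : u - ⌊u⌋ < 1 := by
    have := Int.lt_floor_add_one u; linarith
  by_cases hc : 1/4 ≤ u - ⌊u⌋ ∧ u - ⌊u⌋ < 3/4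
  · refine ⟨0, by norm_num, ?_⟩
    have h := aux_floor_window u ε hc.1 hc.2 hε
    push_cast
    have h1 : v + 0/2 = u + 1 + ε := by rw [hv]; ring
    have h2 : u + (0:ℝ)/2 = u := by ring
    rw [h1, h2, h]
  · push_neg at hc
    refine ⟨1, le_refl _, ?_⟩
    have hveq : v + (1:ℕ)/2 = (u + (1:ℕ)/2) + 1 + ε := by rw [hv]; push_cast; ring
    rw [hveq]
    set w := u + (1:ℕ)/2 with hw
    rcases lt_or_ge (u - ⌊u⌋) (1/4) with hlow | hhigh
    · have hfw : ⌊w⌋ = ⌊u⌋ := by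
        rw [hw]; rw [Int.floor_eq_iff] <;> push_cast <;> constructor <;> try linarith
      exact aux_floor_window w ε (by rw [hfw, hw]; push_cast; linarith)
        (by rw [hfw, hw]; push_cast; linarith) hε
    · have hhi : 3/4 ≤ u - ⌊u⌋ := hc hhigh
      have hfw : ⌊w⌋ = ⌊u⌋ + 1 := by
        rw [hw, Int.floor_eq_iff] <;> push_cast <;> constructor <;> try linarith
      exact aux_floor_window w ε (by rw [hfw, hw]; push_cast; linarith)
        (by rw [hfw, hw]; push_cast; linarith) hε

set_option maxHeartbeats 1000000 in
lemma aux_log_gap (Dv s p q K₁ K₂ : ℕ) (hq : 1 ≤ q) (hpq : q < p) (hpD : p ≤ Dv)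
    (hs : 4*(Dv+1)*(Dv+1) ≤ s) (hK₁ : s ≤ K₁) (hK₂ : s ≤ K₂)
    (hA : (p:ℤ)*K₁ ≤ q*K₂ + Dv) (hB : (q:ℤ)*K₂ ≤ p*K₁ + Dv) :
    ∃ σ : ℕ, σ ≤ 1 ∧
      ⌊Real.log K₂ / Real.log ((p:ℝ)/q) + (σ:ℝ)/2⌋
        = ⌊Real.log K₁ / Real.log ((p:ℝ)/q) + (σ:ℝ)/2⌋ + 1 := by
  have hs1 : 4 ≤ s := by nlinarith
  have hq0 : (0:ℝ) < q := by exact_mod_cast hq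
  have hp0 : (0:ℝ) < p := by
    have : (0:ℕ) < p := by omega
    exact_mod_cast this
  have hqp : (q:ℝ) < p := by exact_mod_cast hpq
  have hρ1 : (1:ℝ) < (p:ℝ)/q := (one_lt_div hq0).mpr hqp
  set L := Real.log ((p:ℝ)/q) with hLdef
  have hL : 0 < L := Real.log_pos hρ1
  -- lower bound on L
  have hLlb : 1/((Dv:ℝ)+1) ≤ L := by
    have h1 : Real.log (((p:ℝ)/q)⁻¹) ≤ ((p:ℝ)/q)⁻¹ - 1 :=
      Real.log_le_sub_one_of_pos (by positivity)
    rw [Real.log_inv] at h1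
    have h2 : ((p:ℝ)/q)⁻¹ = q/p := by field_simp
    rw [h2] at h1
    have h3 : (q:ℝ)/p ≤ (q:ℝ)/(q+1) := by
      apply div_le_div_of_nonneg_left (le_of_lt hq0) (by positivity)
      have : (q:ℕ)+1 ≤ p := hpq
      exact_mod_cast this
    have h4 : 1 - (q:ℝ)/(q+1) = 1/((q:ℝ)+1) := by field_simp; ring
    have h5 : 1/((q:ℝ)+1) ≥ 1/((Dv:ℝ)+1) := by
      apply div_le_div_of_nonneg_left (by norm_num) (by positivity)
      have : q + 1 ≤ Dv + 1 := by omega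
      exact_mod_cast this
    linarith
  have hK₁0 : (0:ℝ) < K₁ := by
    have : 0 < K₁ := by omega
    exact_mod_cast this
  have hK₂0 : (0:ℝ) < K₂ := by
    have : 0 < K₂ := by omega
    exact_mod_cast this
  set u := Real.log K₁ / L with hu
  set v := Real.log K₂ / L with hvdef
  have hAr : (p:ℝ)*K₁ ≤ (q:ℝ)*K₂ + (Dv:ℝ) := by exact_mod_cast hA
  have hBr : (q:ℝ)*K₂ ≤ (p:ℝ)*K₁ + (Dv:ℝ) := by exact_mod_cast hB
  have hq1 : (1:ℝ) ≤ (q:ℝ) := by exact_mod_cast hq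
  have hp1 : (1:ℝ) ≤ (p:ℝ) := by
    have : 1 ≤ p := by omega
    exact_mod_cast this
  set X := (q:ℝ)*K₂ with hX
  set Y := (p:ℝ)*K₁ with hY
  have hX0 : 0 < X := by positivity
  have hY0 : 0 < Y := by positivity
  set ε := (Real.log X - Real.log Y)/L with hε
  have hLne : L ≠ 0 := ne_of_gt hL
  have hnum : Real.log X - Real.log Y = Real.log K₂ - Real.log K₁ - L := by
    rw [hX, hY, Real.log_mul (ne_of_gt hq0) (ne_of_gt hK₂0),
        Real.log_mul (ne_of_gt hp0) (ne_of_gt hK₁0), hLdef,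
        Real.log_div (ne_of_gt hp0) (ne_of_gt hq0)]
    ring
  have hv : v = u + 1 + ε := by
    rw [hvdef, hu, hε, hnum]
    field_simp
    ring
  -- |log X - log Y| ≤ Dv / s
  have hsX : (s:ℝ) ≤ X := by
    have h1 : (s:ℝ) ≤ (K₂:ℝ) := by exact_mod_cast hK₂
    have h2 : (1:ℝ)*(K₂:ℝ) ≤ (q:ℝ)*(K₂:ℝ) :=
      mul_le_mul_of_nonneg_right hq1 (le_of_lt hK₂0)
    rw [hX]; nlinarith
  have hsY : (s:ℝ) ≤ Y := by
    have h1 : (s:ℝ) ≤ (K₁:ℝ) := by exact_mod_cast hK₁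
    have h2 : (1:ℝ)*(K₁:ℝ) ≤ (p:ℝ)*(K₁:ℝ) :=
      mul_le_mul_of_nonneg_right hp1 (le_of_lt hK₁0)
    rw [hY]; nlinarith
  have hXY : |X - Y| ≤ (Dv:ℝ) := by
    rw [abs_le]
    constructor
    · linarith
    · linarith
  have hs0 : (0:ℝ) < s := by
    have : 0 < s := by omega
    exact_mod_cast this
  have hlogXY : |Real.log X - Real.log Y| ≤ (Dv:ℝ)/s := by
    rw [abs_le]
    have hXY' := abs_le.mp hXY
    constructor
    · have h1 : Real.log (Y/X) ≤ Y/X - 1 := Real.log_le_sub_one_of_pos (by positivity)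
      rw [Real.log_div (ne_of_gt hY0) (ne_of_gt hX0)] at h1
      have h2 : Y/X - 1 = (Y - X)/X := by field_simp
      have h3 : (Y - X)/X ≤ (Dv:ℝ)/s := by
        apply div_le_div₀ (by positivity) (by linarith [hXY'.1]) hs0 hsX
      linarith
    · have h1 : Real.log (X/Y) ≤ X/Y - 1 := Real.log_le_sub_one_of_pos (by positivity)
      rw [Real.log_div (ne_of_gt hX0) (ne_of_gt hY0)] at h1
      have h2 : X/Y - 1 = (X - Y)/Y := by field_simp
      have h3 : (X - Y)/Y ≤ (Dv:ℝ)/s := by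
        apply div_le_div₀ (by positivity) (by linarith [hXY'.2]) hs0 hsY
      linarith
  have hεb : |ε| ≤ 1/4 := by
    rw [hε, abs_div, abs_of_pos hL, div_le_iff₀ hL]
    have hsR : (4*((Dv:ℝ)+1)*((Dv:ℝ)+1)) ≤ (s:ℝ) := by exact_mod_cast hs
    have hDv0 : (0:ℝ) ≤ Dv := by positivity
    have hmid : (Dv:ℝ)/s ≤ 1/(4*((Dv:ℝ)+1)) := by
      rw [div_le_div_iff₀ hs0 (by positivity)]
      nlinarith
    have hlast : 1/(4*((Dv:ℝ)+1)) ≤ 1/4 * L := by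
      have : 1/(4*((Dv:ℝ)+1)) = 1/4 * (1/((Dv:ℝ)+1)) := by
        rw [one_div, one_div, one_div, mul_inv]
      rw [this]
      nlinarith
    linarith
  exact aux_exists_shift u v ε hv hεb

def tfD (b s : ℕ) (x : ℕ+) : ℕ :=
  if s ≤ Nat.log b x then (x:ℕ) / b^(Nat.log b x - s) else (x:ℕ)

noncomputable def ffD (b p q σ : ℕ) (x : ℕ+) : ℕ :=
  (⌊Real.log (Nat.log b x : ℝ) / Real.log ((p:ℝ)/(q:ℝ)) + (σ:ℝ)/2⌋).toNat % 3

noncomputable def colD (b s Dv : ℕ) (x : ℕ+) :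
    Fin (b^(s+1)+1) × (Fin (Dv+1) → Fin (Dv+1) → Fin 2 → Fin 3) :=
  (⟨tfD b s x % (b^(s+1)+1), Nat.mod_lt _ (Nat.succ_pos _)⟩,
   fun p q σ => ⟨ffD b p.1 q.1 σ.1 x, Nat.mod_lt _ (by norm_num)⟩)

lemma colD_t_eq {b s Dv : ℕ} {x y : ℕ+} (h : colD b s Dv x = colD b s Dv y)
    (hx : tfD b s x < b^(s+1)) (hy : tfD b s y < b^(s+1)) :
    tfD b s x = tfD b s y := by
  have h1 := congrArg (fun z => z.1.1) h
  simp only [colD] at h1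
  rwa [Nat.mod_eq_of_lt (by omega), Nat.mod_eq_of_lt (by omega)] at h1

lemma colD_f_eq {b s Dv : ℕ} {x y : ℕ+} (h : colD b s Dv x = colD b s Dv y)
    (p q σ : ℕ) (hp : p ≤ Dv) (hq : q ≤ Dv) (hσ : σ ≤ 1) :
    ffD b p q σ x = ffD b p q σ y := by
  have h1 := congrArg
    (fun z => (z.2 ⟨p, by omega⟩ ⟨q, by omega⟩ ⟨σ, by omega⟩).1) h
  simpa only [colD] using h1

set_option maxHeartbeats 1000000 in
lemma aux_no_cross (b s Dv p q : ℕ) (x y : ℕ+) (hq : 1 ≤ q) (hpq : q < p)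
    (hpD : p ≤ Dv) (hs : 4*(Dv+1)*(Dv+1) ≤ s)
    (hKx : s ≤ Nat.log b x) (hKy : s ≤ Nat.log b y)
    (hA : (p:ℤ)*(Nat.log b x) ≤ (q:ℤ)*(Nat.log b y) + Dv)
    (hB : (q:ℤ)*(Nat.log b y) ≤ (p:ℤ)*(Nat.log b x) + Dv)
    (hf : ∀ σ : ℕ, σ ≤ 1 → ffD b p q σ x = ffD b p q σ y) : False := by
  obtain ⟨σ, hσ1, hfl⟩ := aux_log_gap Dv s p q (Nat.log b x) (Nat.log b y)
    hq hpq hpD hs hKx hKy hA hB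
  have hs1 : 1 ≤ s := by nlinarith
  have hq0 : (0:ℝ) < q := by exact_mod_cast hq
  have hqp : (q:ℝ) < p := by exact_mod_cast hpq
  have hρ1 : (1:ℝ) < (p:ℝ)/q := (one_lt_div hq0).mpr hqp
  have hL : 0 < Real.log ((p:ℝ)/q) := Real.log_pos hρ1
  have hKx1 : (1:ℝ) ≤ (Nat.log b x : ℝ) := by
    have : 1 ≤ Nat.log b x := by omega
    exact_mod_cast this
  have hux : (0:ℝ) ≤ Real.log (Nat.log b x : ℝ) / Real.log ((p:ℝ)/q) + (σ:ℝ)/2 := by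
    have h2 := Real.log_nonneg hKx1
    positivity
  have h1 : 0 ≤ ⌊Real.log (Nat.log b x : ℝ) / Real.log ((p:ℝ)/q) + (σ:ℝ)/2⌋ :=
    Int.floor_nonneg.mpr hux
  have hf' := hf σ hσ1
  unfold ffD at hf'
  rw [hfl] at hf'
  omega

set_option maxHeartbeats 1000000 in
lemma aux_main {n : ℕ} (I : Finset (Fin n)) (ev ℓ : Fin n → ℤ) (M : Fin n → ℕ)
    (c b s : ℕ) (hb : 2*c*n + 2 ≤ b) (hs1 : 1 ≤ s)
    (hM1 : ∀ i ∈ I, 1 ≤ M i)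
    (hF7 : ∀ i ∈ I, (b:ℤ)^s * |ev i - ℓ i * (M i : ℤ)| ≤ (c:ℤ) * (M i:ℤ))
    (hF3 : ∀ i ∈ I, |ev i| ≤ (c:ℤ) * (M i : ℤ))
    (hsum : ∑ i ∈ I, ev i = 0)
    (i₁ : Fin n) (hi₁ : i₁ ∈ I)
    (hwin : ∀ j ∈ I, M j ≠ M i₁ → b * M j ≤ M i₁) :
    ∑ j ∈ I.filter (fun j => M j = M i₁), ℓ j = 0 := by
  classical
  set T := I.filter (fun j => M j = M i₁) with hT
  set Tc := I.filter (fun j => ¬ (M j = M i₁)) with hTc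
  have hb2 : 2 ≤ b := by omega
  have hbz : (2:ℤ) ≤ (b:ℤ) := by exact_mod_cast hb2
  have hμ1 : 1 ≤ M i₁ := hM1 i₁ hi₁
  have hμz : (1:ℤ) ≤ ((M i₁ : ℕ):ℤ) := by exact_mod_cast hμ1
  have hsplit : (∑ j ∈ T, ev j) + (∑ j ∈ Tc, ev j) = 0 := by
    rw [hT, hTc, Finset.sum_filter_add_sum_filter_not]
    exact hsum
  have key : (∑ j ∈ T, ℓ j) * ((M i₁:ℕ):ℤ) = ∑ j ∈ T, ℓ j * ((M j:ℕ):ℤ) := by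
    rw [Finset.sum_mul]
    refine Finset.sum_congr rfl ?_
    intro j hj
    have hj2 : M j = M i₁ := (Finset.mem_filter.mp hj).2
    rw [hj2]
  have habs : |(∑ j ∈ T, ℓ j) * ((M i₁:ℕ):ℤ)|
      ≤ (∑ j ∈ T, |ℓ j * ((M j:ℕ):ℤ) - ev j|) + ∑ j ∈ Tc, |ev j| := by
    rw [key]
    have h2 : (∑ j ∈ T, ℓ j * ((M j:ℕ):ℤ))
        = (∑ j ∈ T, (ℓ j * ((M j:ℕ):ℤ) - ev j)) - (∑ j ∈ Tc, ev j) := by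
      rw [Finset.sum_sub_distrib]
      have : (∑ j ∈ T, ev j) = - ∑ j ∈ Tc, ev j := by linarith
      rw [this]; ring
    rw [h2]
    calc |(∑ j ∈ T, (ℓ j * ((M j:ℕ):ℤ) - ev j)) - (∑ j ∈ Tc, ev j)|
        ≤ |∑ j ∈ T, (ℓ j * ((M j:ℕ):ℤ) - ev j)| + |∑ j ∈ Tc, ev j| := abs_sub _ _
      _ ≤ (∑ j ∈ T, |ℓ j * ((M j:ℕ):ℤ) - ev j|) + ∑ j ∈ Tc, |ev j| := by
          gcongr
          · exact Finset.abs_sum_le_sum_abs _ _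
          · exact Finset.abs_sum_le_sum_abs _ _
  -- bounds on the two sums
  have hcard : ∀ S : Finset (Fin n), S.card ≤ n := fun S => by
    calc S.card ≤ (Finset.univ : Finset (Fin n)).card := Finset.card_le_univ S
      _ = n := by simp
  have hTsum : (b:ℤ)^s * (∑ j ∈ T, |ℓ j * ((M j:ℕ):ℤ) - ev j|)
      ≤ (c:ℤ) * n * (M i₁:ℕ) := by
    rw [Finset.mul_sum]
    calc (∑ j ∈ T, (b:ℤ)^s * |ℓ j * ((M j:ℕ):ℤ) - ev j|)
        ≤ ∑ j ∈ T, (c:ℤ) * ((M i₁:ℕ):ℤ) := by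
          refine Finset.sum_le_sum ?_
          intro j hj
          have hj1 : j ∈ I := (Finset.mem_filter.mp hj).1
          have hj2 : M j = M i₁ := (Finset.mem_filter.mp hj).2
          have := hF7 j hj1
          rw [abs_sub_comm] at this
          rw [← hj2]
          exact this
      _ = T.card * ((c:ℤ) * ((M i₁:ℕ):ℤ)) := by rw [Finset.sum_const, nsmul_eq_mul]
      _ ≤ n * ((c:ℤ) * ((M i₁:ℕ):ℤ)) := by
          have hc := hcard T
          have hcz : (T.card : ℤ) ≤ (n:ℤ) := by exact_mod_cast hc
          have hnn : (0:ℤ) ≤ (c:ℤ) * ((M i₁:ℕ):ℤ) := by positivity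
          exact mul_le_mul_of_nonneg_right hcz hnn
      _ = (c:ℤ) * n * (M i₁:ℕ) := by ring
  have hTcsum : (b:ℤ) * (∑ j ∈ Tc, |ev j|) ≤ (c:ℤ) * n * (M i₁:ℕ) := by
    rw [Finset.mul_sum]
    calc (∑ j ∈ Tc, (b:ℤ) * |ev j|)
        ≤ ∑ j ∈ Tc, (c:ℤ) * ((M i₁:ℕ):ℤ) := by
          refine Finset.sum_le_sum ?_
          intro j hj
          have hj1 : j ∈ I := (Finset.mem_filter.mp hj).1
          have hj2 : M j ≠ M i₁ := (Finset.mem_filter.mp hj).2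
          have hw := hwin j hj1 hj2
          have hwz : (b:ℤ) * ((M j:ℕ):ℤ) ≤ ((M i₁:ℕ):ℤ) := by exact_mod_cast hw
          calc (b:ℤ) * |ev j| ≤ (b:ℤ) * ((c:ℤ) * ((M j:ℕ):ℤ)) := by
                have := hF3 j hj1
                have hb0 : (0:ℤ) ≤ b := by linarith
                exact mul_le_mul_of_nonneg_left this hb0
            _ = (c:ℤ) * ((b:ℤ) * ((M j:ℕ):ℤ)) := by ring
            _ ≤ (c:ℤ) * ((M i₁:ℕ):ℤ) := by
                have hc0 : (0:ℤ) ≤ c := by positivity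
                exact mul_le_mul_of_nonneg_left hwz hc0
      _ = Tc.card * ((c:ℤ) * ((M i₁:ℕ):ℤ)) := by rw [Finset.sum_const, nsmul_eq_mul]
      _ ≤ n * ((c:ℤ) * ((M i₁:ℕ):ℤ)) := by
          have hc := hcard Tc
          have hcz : (Tc.card : ℤ) ≤ (n:ℤ) := by exact_mod_cast hc
          have hnn : (0:ℤ) ≤ (c:ℤ) * ((M i₁:ℕ):ℤ) := by positivity
          exact mul_le_mul_of_nonneg_right hcz hnn
      _ = (c:ℤ) * n * (M i₁:ℕ) := by ring
  -- combine
  set S := (∑ j ∈ T, ℓ j) with hS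
  set Sum1 := (∑ j ∈ T, |ℓ j * ((M j:ℕ):ℤ) - ev j|) with hSum1
  set Sum2 := (∑ j ∈ Tc, |ev j|) with hSum2
  set B := ((b:ℕ):ℤ) with hB
  set μ := ((M i₁:ℕ):ℤ) with hμ
  have hB1 : (1:ℤ) ≤ B := by rw [hB]; exact_mod_cast (by omega : 1 ≤ b)
  have hBpow1 : (1:ℤ) ≤ B^s := by
    have h := pow_le_pow_left₀ (by norm_num : (0:ℤ) ≤ 1) hB1 s
    simpa using h
  have hBB : B ≤ B^s := by
    have h := pow_le_pow_right₀ hB1 hs1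
    simpa using h
  have hSum1nn : 0 ≤ Sum1 := Finset.sum_nonneg (fun j _ => abs_nonneg _)
  have hSum2nn : 0 ≤ Sum2 := Finset.sum_nonneg (fun j _ => abs_nonneg _)
  have hμ0 : (0:ℤ) ≤ μ := by rw [hμ]; exact Int.natCast_nonneg _
  have habs' : |S| * μ ≤ Sum1 + Sum2 := by
    rwa [abs_mul, abs_of_nonneg hμ0] at habs
  have hcn : (2:ℤ)*c*n + 2 ≤ B := by rw [hB]; exact_mod_cast hb
  have hc0 : (0:ℤ) ≤ (c:ℤ)*n := by positivity
  have hfinal : B^s * B * (|S| * μ) < B^s * B * μ := by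
    have h1 : B^s * B * (|S| * μ) ≤ B^s * B * (Sum1 + Sum2) := by
      have hnn : (0:ℤ) ≤ B^s * B := by positivity
      exact mul_le_mul_of_nonneg_left habs' hnn
    have h2 : B^s * B * (Sum1 + Sum2) = B * (B^s * Sum1) + B^s * (B * Sum2) := by ring
    have h3 : B * (B^s * Sum1) ≤ B * ((c:ℤ) * n * μ) :=
      mul_le_mul_of_nonneg_left hTsum (by positivity)
    have h4 : B^s * (B * Sum2) ≤ B^s * ((c:ℤ) * n * μ) :=
      mul_le_mul_of_nonneg_left hTcsum (by positivity)
    have h5 : B * ((c:ℤ) * n * μ) ≤ B^s * ((c:ℤ) * n * μ) := by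
      have : (0:ℤ) ≤ (c:ℤ) * n * μ := by positivity
      exact mul_le_mul_of_nonneg_right hBB this
    have h7 : (c:ℤ)*n*μ + (c:ℤ)*n*μ < B * μ := by
      have h9 := mul_le_mul_of_nonneg_right hcn hμ0
      linarith
    have hBspos : (0:ℤ) < B^s := by positivity
    have h6 : B^s * ((c:ℤ) * n * μ) + B^s * ((c:ℤ) * n * μ) < B^s * B * μ := by
      have h8 := mul_lt_mul_of_pos_left h7 hBspos
      calc B^s * ((c:ℤ)*n*μ) + B^s*((c:ℤ)*n*μ) = B^s * ((c:ℤ)*n*μ + (c:ℤ)*n*μ) := by ring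
        _ < B^s * (B*μ) := h8
        _ = B^s * B * μ := by ring
    linarith
  have hlt : |S| * μ < μ := by
    have hpos : (0:ℤ) < B^s * B := by positivity
    exact lt_of_mul_lt_mul_left hfinal (le_of_lt hpos)
  have hS1 : |S| < 1 := by
    by_contra hcon
    push_neg at hcon
    have := mul_le_mul_of_nonneg_right hcon hμ0
    rw [one_mul] at this
    linarith
  have hS0 : |S| = 0 := le_antisymm (Int.lt_add_one_iff.mp (by simpa using hS1)) (abs_nonneg S)
  exact abs_eq_zero.mp hS0

set_option maxHeartbeats 2000000 in
/-- Let `P(x₁,…,xₙ) = P₁(x₁) + … + Pₙ(xₙ)` where each `Pᵢ ∈ ℤ[x]` has no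
constant term and not all `Pᵢ` are zero. If `P` is non-trivially partition
regular on `ℕ`, then there are a degree `d ≥ 1` and a nonempty set `J` of
indices with `Pⱼ ≠ 0`, `deg Pⱼ = d` for all `j ∈ J`, and the sum over `J` of
the leading coefficients equal to `0`. -/
theorem single_variable_monomials_necessary {n : ℕ} (P : Fin n → Polynomial ℤ)
    (h0 : ∀ i, (P i).coeff 0 = 0) (hne : ∃ i, P i ≠ 0)
    (hPR : ∀ (r : ℕ) (C : ℕ+ → Fin r), ∃ a : Fin n → ℕ+,
      (∀ i j, C (a i) = C (a j)) ∧
      (∑ i, (P i).eval (((a i : ℕ) : ℤ))) = 0 ∧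
      (∃ i j, a i ≠ a j)) :
    ∃ d : ℕ, 1 ≤ d ∧ ∃ J : Finset (Fin n), J.Nonempty ∧
      (∀ j ∈ J, P j ≠ 0 ∧ (P j).natDegree = d) ∧
      ∑ j ∈ J, (P j).leadingCoeff = 0 := by
  classical
  obtain ⟨iw, hiw⟩ := hne
  set Dv := Finset.univ.sup (fun i => (P i).natDegree) with hDv
  set A := Finset.univ.sup (fun i => ∑ m ∈ Finset.range ((P i).natDegree + 1),
    ((P i).coeff m).natAbs) with hA
  set cC := A*(Dv+1)*2^Dv with hcC
  set s := 4*(Dv+1)*(Dv+1) with hs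
  set b := 2*cC*n + 2 with hb
  have hb2 : 2 ≤ b := by omega
  have hb1 : 1 < b := by omega
  have hb0 : 0 < b := by omega
  have hs1 : 1 ≤ s := by
    have : 0 < s := by rw [hs]; positivity
    omega
  have hdD : ∀ i, (P i).natDegree ≤ Dv := fun i =>
    Finset.le_sup (f := fun i => (P i).natDegree) (Finset.mem_univ i)
  have hAi : ∀ i, (∑ m ∈ Finset.range ((P i).natDegree + 1),
      ((P i).coeff m).natAbs) ≤ A := fun i =>
    Finset.le_sup (f := fun i => ∑ m ∈ Finset.range ((P i).natDegree + 1),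
      ((P i).coeff m).natAbs) (Finset.mem_univ i)
  have hd1 : ∀ i, P i ≠ 0 → 1 ≤ (P i).natDegree := by
    intro i hPi
    by_contra hcon
    push_neg at hcon
    have h00 : (P i).natDegree = 0 := by omega
    obtain ⟨cc, hcc⟩ := Polynomial.natDegree_eq_zero.mp h00
    have hcc0 : cc = 0 := by
      have h01 := h0 i
      rw [← hcc] at h01
      simpa using h01
    rw [hcc0] at hcc
    simp only [map_zero] at hcc
    exact hPi hcc.symm
  -- apply partition regularity with our coloring
  obtain ⟨a, hmono, hsum, io, jo, hij⟩ :=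
    hPR (Fintype.card (Fin (b^(s+1)+1) × (Fin (Dv+1) → Fin (Dv+1) → Fin 2 → Fin 3)))
      (fun x => (Fintype.equivFin _) (colD b s Dv x))
  have hceq : ∀ i j, colD b s Dv (a i) = colD b s Dv (a j) :=
    fun i j => (Fintype.equivFin _).injective (hmono i j)
  have hkhigh : ∀ x : ℕ+, (x:ℕ) < b^(Nat.log b x + 1) := fun x =>
    Nat.lt_pow_succ_log_self hb1 x
  have hklow : ∀ x : ℕ+, b^(Nat.log b x) ≤ (x:ℕ) := fun x =>
    Nat.pow_log_le_self b (Nat.pos_iff_ne_zero.mp x.pos)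
  have htlt : ∀ x : ℕ+, tfD b s x < b^(s+1) := by
    intro x
    unfold tfD
    split
    · rename_i hsk
      rw [Nat.div_lt_iff_lt_mul (by positivity)]
      calc (x:ℕ) < b^(Nat.log b x + 1) := hkhigh x
        _ = b^(s+1) * b^(Nat.log b x - s) := by
            rw [← pow_add]; congr 1; omega
    · rename_i hsk
      calc (x:ℕ) < b^(Nat.log b x + 1) := hkhigh x
        _ ≤ b^(s+1) := Nat.pow_le_pow_right hb0 (by omega)
  have hteq : ∀ i j, tfD b s (a i) = tfD b s (a j) :=
    fun i j => colD_t_eq (hceq i j) (htlt _) (htlt _)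
  have hfeq : ∀ i j (p q σ : ℕ), p ≤ Dv → q ≤ Dv → σ ≤ 1 →
      ffD b p q σ (a i) = ffD b p q σ (a j) :=
    fun i j p q σ hp hq hσ => colD_f_eq (hceq i j) p q σ hp hq hσ
  -- all big case
  by_cases hsmall : ∀ i, Nat.log b (a i) < s
  · exfalso
    apply hij
    have h1 : ∀ i : Fin n, tfD b s (a i) = ((a i : ℕ)) := by
      intro i
      unfold tfD
      rw [if_neg (by have := hsmall i; omega)]
    have h2 : ((a io : ℕ)) = ((a jo : ℕ)) := by
      rw [← h1 io, ← h1 jo]; exact hteq io jo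
    exact PNat.coe_injective h2
  push_neg at hsmall
  obtain ⟨iS, hiS⟩ := hsmall
  have htlow : ∀ (x : ℕ+), s ≤ Nat.log b x → b^s ≤ tfD b s x := by
    intro x hsk
    unfold tfD
    rw [if_pos hsk]
    have h1 : b^(Nat.log b x) / b^(Nat.log b x - s) ≤ (x:ℕ) / b^(Nat.log b x - s) :=
      Nat.div_le_div_right (hklow x)
    have h2 : b^(Nat.log b x) / b^(Nat.log b x - s) = b^s := by
      rw [Nat.pow_div (by omega) hb0]
      congr 1
      omega
    omega
  have hbig : ∀ i, s ≤ Nat.log b (a i) := by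
    intro i
    by_contra hcon
    push_neg at hcon
    have h1 : tfD b s (a i) = ((a i : ℕ)) := by
      unfold tfD; rw [if_neg (by omega)]
    have h2 : ((a i:ℕ)) < b^s :=
      lt_of_lt_of_le (hkhigh (a i)) (Nat.pow_le_pow_right hb0 (by omega))
    have h3 := htlow (a iS) hiS
    have h4 := hteq i iS
    omega
  -- the common leading block value t
  set t := tfD b s (a iS) with htdef
  have hteq' : ∀ i, tfD b s (a i) = t := fun i => hteq i iS
  have htlow' : b^s ≤ t := htlow _ hiS
  have hthigh : t < b^(s+1) := htlt _
  have ht1 : 1 ≤ t := le_trans (Nat.one_le_pow _ _ hb0) htlow'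
  set κ : Fin n → ℕ := fun i => Nat.log b (a i) - s with hκ
  have hdivt : ∀ i, ((a i : ℕ)) / b^(κ i) = t := by
    intro i
    have h1 := hteq' i
    unfold tfD at h1
    rw [if_pos (hbig i)] at h1
    exact h1
  have hrep1 : ∀ i, t * b^(κ i) ≤ ((a i:ℕ)) := by
    intro i
    have h1 : ((a i:ℕ)) / b^(κ i) * b^(κ i) ≤ (a i:ℕ) := Nat.div_mul_le_self _ _
    rwa [hdivt i] at h1
  have hrep2 : ∀ i, ((a i:ℕ)) < t * b^(κ i) + b^(κ i) := by
    intro i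
    have h2 := Nat.div_add_mod ((a i:ℕ)) (b^(κ i))
    rw [hdivt i] at h2
    rw [mul_comm (b^(κ i)) t] at h2
    have h3 : (a i:ℕ) % b^(κ i) < b^(κ i) := Nat.mod_lt _ (by positivity)
    omega
  have hbk : ∀ i, b^(Nat.log b (a i)) ≤ t * b^(κ i) := by
    intro i
    calc b^(Nat.log b (a i)) = b^s * b^(κ i) := by
          rw [← pow_add]; congr 1; have := hbig i; simp only [hκ]; omega
      _ ≤ t * b^(κ i) := Nat.mul_le_mul_right _ htlow'
  have hbk2 : ∀ i, t * b^(κ i) < b^(Nat.log b (a i) + 1) := by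
    intro i
    calc t * b^(κ i) < b^(s+1) * b^(κ i) :=
          (Nat.mul_lt_mul_right (by positivity)).mpr hthigh
      _ = b^(Nat.log b (a i) + 1) := by
          rw [← pow_add]; congr 1; have := hbig i; simp only [hκ]; omega
  set M : Fin n → ℕ := fun i => (t * b^(κ i))^((P i).natDegree) with hM
  have hM1 : ∀ i, 1 ≤ M i := by
    intro i
    have : 0 < t * b^(κ i) := by positivity
    exact Nat.one_le_pow _ _ this
  set I := Finset.univ.filter (fun i => P i ≠ 0) with hI
  have hmemI : ∀ i, i ∈ I ↔ P i ≠ 0 := by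
    intro i; rw [hI, Finset.mem_filter]; simp
  -- no cross-degree near-collisions
  have hnocross : ∀ i j, P i ≠ 0 → P j ≠ 0 → (P j).natDegree < (P i).natDegree →
      M i < b * M j → M j < b * M i → False := by
    intro i j hPi hPj hdij h1 h2
    have hMi_low : b^((P i).natDegree * Nat.log b (a i)) ≤ M i := by
      calc b^((P i).natDegree * Nat.log b (a i))
          = (b^(Nat.log b (a i)))^((P i).natDegree) := by
            rw [← pow_mul]; congr 1; ring
        _ ≤ (t * b^(κ i))^((P i).natDegree) := Nat.pow_le_pow_left (hbk i) _
    have hMj_low : b^((P j).natDegree * Nat.log b (a j)) ≤ M j := by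
      calc b^((P j).natDegree * Nat.log b (a j))
          = (b^(Nat.log b (a j)))^((P j).natDegree) := by
            rw [← pow_mul]; congr 1; ring
        _ ≤ (t * b^(κ j))^((P j).natDegree) := Nat.pow_le_pow_left (hbk j) _
    have hMi_high : M i < b^((P i).natDegree * Nat.log b (a i) + (P i).natDegree) := by
      calc M i = (t * b^(κ i))^((P i).natDegree) := rfl
        _ < (b^(Nat.log b (a i) + 1))^((P i).natDegree) :=
            Nat.pow_lt_pow_left (hbk2 i) (by have := hd1 i hPi; omega)
        _ = b^((P i).natDegree * Nat.log b (a i) + (P i).natDegree) := by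
            rw [← pow_mul]; congr 1; ring
    have hMj_high : M j < b^((P j).natDegree * Nat.log b (a j) + (P j).natDegree) := by
      calc M j = (t * b^(κ j))^((P j).natDegree) := rfl
        _ < (b^(Nat.log b (a j) + 1))^((P j).natDegree) :=
            Nat.pow_lt_pow_left (hbk2 j) (by have := hd1 j hPj; omega)
        _ = b^((P j).natDegree * Nat.log b (a j) + (P j).natDegree) := by
            rw [← pow_mul]; congr 1; ring
    have he1 : (P i).natDegree * Nat.log b (a i)
        < (P j).natDegree * Nat.log b (a j) + (P j).natDegree + 1 := by
      have hpow : b^((P i).natDegree * Nat.log b (a i))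
          < b^((P j).natDegree * Nat.log b (a j) + (P j).natDegree + 1) := by
        calc b^((P i).natDegree * Nat.log b (a i)) ≤ M i := hMi_low
          _ < b * M j := h1
          _ < b * b^((P j).natDegree * Nat.log b (a j) + (P j).natDegree) :=
              (Nat.mul_lt_mul_left hb0).mpr hMj_high
          _ = b^((P j).natDegree * Nat.log b (a j) + (P j).natDegree + 1) := by
              rw [pow_succ]; ring
      exact (Nat.pow_lt_pow_iff_right hb1).mp hpow
    have he2 : (P j).natDegree * Nat.log b (a j)
        < (P i).natDegree * Nat.log b (a i) + (P i).natDegree + 1 := by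
      have hpow : b^((P j).natDegree * Nat.log b (a j))
          < b^((P i).natDegree * Nat.log b (a i) + (P i).natDegree + 1) := by
        calc b^((P j).natDegree * Nat.log b (a j)) ≤ M j := hMj_low
          _ < b * M i := h2
          _ < b * b^((P i).natDegree * Nat.log b (a i) + (P i).natDegree) :=
              (Nat.mul_lt_mul_left hb0).mpr hMi_high
          _ = b^((P i).natDegree * Nat.log b (a i) + (P i).natDegree + 1) := by
              rw [pow_succ]; ring
      exact (Nat.pow_lt_pow_iff_right hb1).mp hpow
    refine aux_no_cross b s Dv ((P i).natDegree) ((P j).natDegree) (a i) (a j)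
      (hd1 j hPj) hdij (hdD i) (le_of_eq hs.symm) (hbig i) (hbig j) ?_ ?_
      (fun σ hσ => hfeq i j _ _ σ (hdD i) (hdD j) hσ)
    · have hn1 : (P i).natDegree * Nat.log b (a i)
          ≤ (P j).natDegree * Nat.log b (a j) + Dv := by
        have := hdD j; omega
      exact_mod_cast hn1
    · have hn2 : (P j).natDegree * Nat.log b (a j)
          ≤ (P i).natDegree * Nat.log b (a i) + Dv := by
        have := hdD i; omega
      exact_mod_cast hn2
  -- the window claim
  have hclaim : ∀ i j, P i ≠ 0 → P j ≠ 0 → M i < b * M j → M j < b * M i →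
      (P i).natDegree = (P j).natDegree ∧ κ i = κ j := by
    intro i j hPi hPj h1 h2
    rcases Nat.lt_trichotomy ((P i).natDegree) ((P j).natDegree) with hlt | heq | hgt
    · exact absurd (hnocross j i hPj hPi hlt h2 h1) (by simp)
    · refine ⟨heq, ?_⟩
      have hsame : ∀ u v : Fin n, 1 ≤ (P u).natDegree →
          (P u).natDegree = (P v).natDegree →
          M v < b * M u → κ u ≤ κ v → κ v ≤ κ u := by
        intro u v hdu hduv hMv hκuv
        by_contra hcon
        push_neg at hcon
        have hΔ : κ v = κ u + (κ v - κ u) := by omega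
        have hY : t * b^(κ v) = (t * b^(κ u)) * b^(κ v - κ u) := by
          conv_lhs => rw [hΔ]
          rw [pow_add]; ring
        have hMveq : M v = M u * (b^(κ v - κ u))^((P u).natDegree) := by
          show (t * b^(κ v))^((P v).natDegree) = _
          rw [← hduv, hY, mul_pow]
        rw [hMveq] at hMv
        have hMu0 : 0 < M u := hM1 u
        have hcanc : (b^(κ v - κ u))^((P u).natDegree) < b := by
          have h4 := hMv
          rw [mul_comm b (M u)] at h4
          exact lt_of_mul_lt_mul_left h4 (le_of_lt hMu0)
        have hpow : (b^(κ v - κ u))^((P u).natDegree)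
            = b^((κ v - κ u) * (P u).natDegree) := by
          rw [← pow_mul]
        rw [hpow] at hcanc
        have hexp : (κ v - κ u) * (P u).natDegree < 1 := by
          have h5 : b^((κ v - κ u) * (P u).natDegree) < b^1 := by simpa using hcanc
          exact (Nat.pow_lt_pow_iff_right hb1).mp h5
        have hpos : 0 < (κ v - κ u) * (P u).natDegree :=
          Nat.mul_pos (by omega) (by omega)
        omega
      rcases le_total (κ i) (κ j) with hle | hle
      · exact le_antisymm hle (hsame i j (hd1 i hPi) heq h2 hle)
      · exact (le_antisymm hle (hsame j i (hd1 j hPj) heq.symm h1 hle)).symm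
    · exact absurd (hnocross i j hPi hPj hgt h1 h2) (by simp)
  -- per-index integer estimates
  have hazb : ∀ i, (b:ℕ)^s ≤ ((a i : ℕ)) := fun i =>
    le_trans (Nat.pow_le_pow_right hb0 (hbig i)) (hklow (a i))
  have haz1 : ∀ i, (1:ℤ) ≤ ((a i : ℕ) : ℤ) := by
    intro i
    exact_mod_cast (a i).one_le
  -- `M i ≤ a^d ≤ 2^Dv * M i` and the error estimates, in ℕ
  have hMlea : ∀ i, M i ≤ ((a i:ℕ))^((P i).natDegree) := fun i =>
    Nat.pow_le_pow_left (hrep1 i) _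
  have ha2T : ∀ i, ((a i:ℕ)) ≤ 2 * (t * b^(κ i)) := by
    intro i
    have h1 := hrep2 i
    have h2 : 1 * b^(κ i) ≤ t * b^(κ i) := Nat.mul_le_mul_right _ ht1
    omega
  have hpow2 : ∀ i, ((a i:ℕ))^((P i).natDegree) ≤ 2^Dv * M i := by
    intro i
    calc ((a i:ℕ))^((P i).natDegree) ≤ (2 * (t * b^(κ i)))^((P i).natDegree) :=
          Nat.pow_le_pow_left (ha2T i) _
      _ = 2^((P i).natDegree) * M i := by rw [mul_pow]
      _ ≤ 2^Dv * M i :=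
          Nat.mul_le_mul_right _ (Nat.pow_le_pow_right (by norm_num) (hdD i))
  have herrN : ∀ i, P i ≠ 0 →
      b^s * (((a i:ℕ))^((P i).natDegree) - M i) ≤ Dv * (2^Dv * M i) := by
    intro i hPi
    have hd := hd1 i hPi
    set T := t * b^(κ i) with hT
    set E := ((a i:ℕ)) - T with hE
    have haTE : ((a i:ℕ)) = T + E := by
      have := hrep1 i
      rw [hE, hT]; omega
    have hEb : E ≤ b^(κ i) := by
      have h1 := hrep2 i
      rw [hE, hT]; omega
    have hstep : ((a i:ℕ))^((P i).natDegree)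
        ≤ M i + (P i).natDegree * E * ((a i:ℕ))^((P i).natDegree - 1) := by
      have h6 := aux_pow_sub_pow T E ((P i).natDegree - 1)
      rw [Nat.sub_add_cancel hd] at h6
      rw [haTE]
      calc (T+E)^((P i).natDegree)
          ≤ T^((P i).natDegree) + (P i).natDegree * E * (T+E)^((P i).natDegree-1) := h6
        _ = M i + (P i).natDegree * E * (T+E)^((P i).natDegree-1) := rfl
    have hbsE : b^s * E ≤ ((a i:ℕ)) := by
      calc b^s * E ≤ b^s * b^(κ i) := Nat.mul_le_mul_left _ hEb
        _ = b^(s + κ i) := by rw [pow_add]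
        _ = b^(Nat.log b (a i)) := by congr 1; have := hbig i; simp only [hκ]; omega
        _ ≤ ((a i:ℕ)) := hklow (a i)
    have hmain : b^s * (((a i:ℕ))^((P i).natDegree) - M i)
        ≤ (P i).natDegree * (((a i:ℕ))^((P i).natDegree)) := by
      have h7 : (((a i:ℕ))^((P i).natDegree) - M i)
          ≤ (P i).natDegree * E * ((a i:ℕ))^((P i).natDegree - 1) := by omega
      calc b^s * (((a i:ℕ))^((P i).natDegree) - M i)
          ≤ b^s * ((P i).natDegree * E * ((a i:ℕ))^((P i).natDegree - 1)) :=
            Nat.mul_le_mul_left _ h7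
        _ = (P i).natDegree * ((b^s * E) * ((a i:ℕ))^((P i).natDegree - 1)) := by ring
        _ ≤ (P i).natDegree * (((a i:ℕ)) * ((a i:ℕ))^((P i).natDegree - 1)) :=
            Nat.mul_le_mul_left _ (Nat.mul_le_mul_right _ hbsE)
        _ = (P i).natDegree * (((a i:ℕ))^((P i).natDegree)) := by
            congr 1
            rw [← pow_succ']
            congr 1
            omega
    calc b^s * (((a i:ℕ))^((P i).natDegree) - M i)
        ≤ (P i).natDegree * (((a i:ℕ))^((P i).natDegree)) := hmain
      _ ≤ Dv * (2^Dv * M i) := Nat.mul_le_mul (hdD i) (hpow2 i)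
  -- coefficient sum bound in ℤ
  have hcoefA : ∀ i, (∑ m ∈ Finset.range ((P i).natDegree + 1), |(P i).coeff m|)
      ≤ (A:ℤ) := by
    intro i
    have h1 : (∑ m ∈ Finset.range ((P i).natDegree + 1), |(P i).coeff m|)
        = ((∑ m ∈ Finset.range ((P i).natDegree + 1), ((P i).coeff m).natAbs : ℕ) : ℤ) := by
      push_cast [Int.natCast_natAbs]
      rfl
    rw [h1]
    exact_mod_cast hAi i
  have hleadA : ∀ i, |(P i).leadingCoeff| ≤ (A:ℤ) := by
    intro i
    refine le_trans ?_ (hcoefA i)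
    exact Finset.single_le_sum (f := fun m => |(P i).coeff m|)
      (fun m _ => abs_nonneg _) (Finset.self_mem_range_succ _)
  -- F3 : |ev i| ≤ cC * M i
  have hF3 : ∀ i ∈ I, |(P i).eval (((a i : ℕ) : ℤ))| ≤ (cC:ℤ) * ((M i : ℕ):ℤ) := by
    intro i _
    have h1 := aux_abs_eval_le (P i) (((a i : ℕ) : ℤ)) (haz1 i)
    have h2 : (((a i : ℕ) : ℤ))^((P i).natDegree) ≤ ((2^Dv * M i : ℕ) : ℤ) := by
      exact_mod_cast hpow2 i
    have h3 : (0:ℤ) ≤ (((a i : ℕ) : ℤ))^((P i).natDegree) := by positivity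
    calc |(P i).eval (((a i : ℕ) : ℤ))|
        ≤ (∑ m ∈ Finset.range ((P i).natDegree+1), |(P i).coeff m|)
            * (((a i : ℕ) : ℤ))^((P i).natDegree) := h1
      _ ≤ (A:ℤ) * (((a i : ℕ) : ℤ))^((P i).natDegree) :=
          mul_le_mul_of_nonneg_right (hcoefA i) h3
      _ ≤ (A:ℤ) * ((2^Dv * M i : ℕ) : ℤ) :=
          mul_le_mul_of_nonneg_left h2 (by positivity)
      _ ≤ (cC:ℤ) * ((M i : ℕ):ℤ) := by
          rw [hcC]
          push_cast
          have hnn : (0:ℤ) ≤ (A:ℤ)*(Dv:ℤ)*2^Dv*((M i:ℕ):ℤ) := by positivity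
          linarith [hnn]
  -- F7
  have hF7 : ∀ i ∈ I, (b:ℤ)^s * |(P i).eval (((a i : ℕ) : ℤ))
      - (P i).leadingCoeff * ((M i : ℕ):ℤ)| ≤ (cC:ℤ) * ((M i : ℕ):ℤ) := by
    intro i hiI
    have hPi : P i ≠ 0 := (hmemI i).mp hiI
    have hd := hd1 i hPi
    set az := (((a i : ℕ)) : ℤ) with haz
    have h4 := aux_abs_eval_sub_lead_le (P i) az (haz1 i)
    have h4' : |(P i).eval az - (P i).leadingCoeff * az^((P i).natDegree)|
        ≤ (A:ℤ) * az^((P i).natDegree - 1) := by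
      refine le_trans h4 (mul_le_mul_of_nonneg_right (hcoefA i) ?_)
      positivity
    -- b^s * az^(d-1) ≤ az^d
    have h5 : (b:ℤ)^s * az^((P i).natDegree - 1) ≤ az^((P i).natDegree) := by
      have h5a : ((b^s : ℕ):ℤ) ≤ az := by rw [haz]; exact_mod_cast hazb i
      calc (b:ℤ)^s * az^((P i).natDegree - 1) ≤ az * az^((P i).natDegree - 1) := by
            refine mul_le_mul_of_nonneg_right ?_ (by positivity)
            exact_mod_cast h5a
        _ = az^((P i).natDegree) := by
            rw [← pow_succ']
            congr 1
            omega
    -- difference of powers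
    have h6 : |az^((P i).natDegree) - ((M i : ℕ):ℤ)|
        = (((((a i:ℕ))^((P i).natDegree) - M i : ℕ)) : ℤ) := by
      rw [abs_of_nonneg]
      · rw [Int.ofNat_sub (hMlea i)]
        push_cast
        rfl
      · have hMla := hMlea i
        have hcast : ((M i:ℕ):ℤ) ≤ az^((P i).natDegree) := by
          rw [haz]
          exact_mod_cast hMla
        linarith
    have h7 : (b:ℤ)^s * |az^((P i).natDegree) - ((M i : ℕ):ℤ)|
        ≤ ((Dv * (2^Dv * M i) : ℕ) : ℤ) := by
      rw [h6]
      have := herrN i hPi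
      exact_mod_cast this
    -- combine
    have htri : |(P i).eval az - (P i).leadingCoeff * ((M i : ℕ):ℤ)|
        ≤ |(P i).eval az - (P i).leadingCoeff * az^((P i).natDegree)|
          + |(P i).leadingCoeff| * |az^((P i).natDegree) - ((M i : ℕ):ℤ)| := by
      have hid : (P i).eval az - (P i).leadingCoeff * ((M i : ℕ):ℤ)
          = ((P i).eval az - (P i).leadingCoeff * az^((P i).natDegree))
            + (P i).leadingCoeff * (az^((P i).natDegree) - ((M i : ℕ):ℤ)) := by ring
      rw [hid]
      refine le_trans (abs_add_le _ _) ?_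
      rw [abs_mul]
    have hb0z : (0:ℤ) ≤ (b:ℤ)^s := by positivity
    have hcomb : (b:ℤ)^s * |(P i).eval az - (P i).leadingCoeff * ((M i : ℕ):ℤ)|
        ≤ (A:ℤ) * az^((P i).natDegree)
          + (A:ℤ) * ((Dv * (2^Dv * M i) : ℕ) : ℤ) := by
      calc (b:ℤ)^s * |(P i).eval az - (P i).leadingCoeff * ((M i : ℕ):ℤ)|
          ≤ (b:ℤ)^s * (|(P i).eval az - (P i).leadingCoeff * az^((P i).natDegree)|
            + |(P i).leadingCoeff| * |az^((P i).natDegree) - ((M i : ℕ):ℤ)|) :=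
            mul_le_mul_of_nonneg_left htri hb0z
        _ = (b:ℤ)^s * |(P i).eval az - (P i).leadingCoeff * az^((P i).natDegree)|
            + |(P i).leadingCoeff| * ((b:ℤ)^s * |az^((P i).natDegree) - ((M i : ℕ):ℤ)|) := by
            ring
        _ ≤ (A:ℤ) * az^((P i).natDegree)
            + (A:ℤ) * ((Dv * (2^Dv * M i) : ℕ) : ℤ) := by
            have hp1 : (b:ℤ)^s * |(P i).eval az - (P i).leadingCoeff * az^((P i).natDegree)|
                ≤ (A:ℤ) * az^((P i).natDegree) := by
              calc (b:ℤ)^s * |(P i).eval az - (P i).leadingCoeff * az^((P i).natDegree)|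
                  ≤ (b:ℤ)^s * ((A:ℤ) * az^((P i).natDegree - 1)) :=
                    mul_le_mul_of_nonneg_left h4' hb0z
                _ = (A:ℤ) * ((b:ℤ)^s * az^((P i).natDegree - 1)) := by ring
                _ ≤ (A:ℤ) * az^((P i).natDegree) :=
                    mul_le_mul_of_nonneg_left h5 (by positivity)
            have hp2 : |(P i).leadingCoeff| * ((b:ℤ)^s * |az^((P i).natDegree) - ((M i : ℕ):ℤ)|)
                ≤ (A:ℤ) * ((Dv * (2^Dv * M i) : ℕ) : ℤ) := by
              refine mul_le_mul (hleadA i) h7 (by positivity) (by positivity)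
            linarith
    refine le_trans hcomb ?_
    have h8 : az^((P i).natDegree) ≤ ((2^Dv * M i : ℕ) : ℤ) := by
      rw [haz]; exact_mod_cast hpow2 i
    have h9 : (A:ℤ) * az^((P i).natDegree) ≤ (A:ℤ) * ((2^Dv * M i : ℕ) : ℤ) :=
      mul_le_mul_of_nonneg_left h8 (by positivity)
    rw [hcC]
    push_cast
    push_cast at h9
    linarith [h9]
  -- sum over I
  have hsumI : ∑ i ∈ I, (P i).eval (((a i : ℕ) : ℤ)) = 0 := by
    rw [hI]
    rw [Finset.sum_filter_of_ne]
    · exact hsum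
    · intro x _ hfx
      intro hP0
      apply hfx
      rw [hP0]
      simp
  -- maximal element
  have hiwI : iw ∈ I := (hmemI iw).mpr hiw
  obtain ⟨i₁, hi₁I, hmax⟩ := Finset.exists_max_image I M ⟨iw, hiwI⟩
  have hwin : ∀ j ∈ I, M j ≠ M i₁ → b * M j ≤ M i₁ := by
    intro j hjI hMne
    by_contra hcon
    push_neg at hcon
    have h2 : M j < b * M i₁ := by
      have h3 := hmax j hjI
      have h4 := hM1 i₁
      nlinarith
    have h5 := hclaim i₁ j ((hmemI i₁).mp hi₁I) ((hmemI j).mp hjI) hcon h2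
    apply hMne
    show (t * b^(κ j))^((P j).natDegree) = (t * b^(κ i₁))^((P i₁).natDegree)
    rw [h5.1, h5.2]
  have hzero := aux_main I (fun i => (P i).eval (((a i : ℕ) : ℤ)))
    (fun i => (P i).leadingCoeff) M cC b s (by omega) hs1
    (fun i _ => hM1 i) hF7 hF3 hsumI i₁ hi₁I hwin
  -- conclusion
  refine ⟨(P i₁).natDegree, hd1 i₁ ((hmemI i₁).mp hi₁I),
    I.filter (fun j => M j = M i₁), ⟨i₁, Finset.mem_filter.mpr ⟨hi₁I, rfl⟩⟩, ?_, hzero⟩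
  intro j hjJ
  have hjI : j ∈ I := (Finset.mem_filter.mp hjJ).1
  have hjM : M j = M i₁ := (Finset.mem_filter.mp hjJ).2
  have hPj : P j ≠ 0 := (hmemI j).mp hjI
  refine ⟨hPj, ?_⟩
  have hw1 : M j < b * M i₁ := by
    have := hM1 i₁
    nlinarith
  have hw2 : M i₁ < b * M j := by
    rw [hjM]
    have := hM1 i₁
    nlinarith
  exact (hclaim j i₁ hPj ((hmemI i₁).mp hi₁I) hw1 hw2).1
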